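/- arXiv:0709.0124 — 6 statements merged into one kernel-verified Lean document; each statement's English description precedes it below -/
import Mathlib

section
/- Let N be a positive integer and let A, C, D be N×N complex matrices. There exist functions f_1, …, f_N : ℝ×ℝ → ℂ such that for every complex row vector s = (x_1, …, x_N) with x_n = x_{nI} + i·x_{nQ} one has s·A·sᴴ + s·C·sᵀ + s*·D·sᴴ = Σ_{n=1}^N f_n(x_{nI}, x_{nQ}), if and only if the three matrices A, C + Cᵀ, and D + Dᵀ are diagonal. -/
open Matrix

def Svec (N : ℕ) (p q : Fin N) (a b : ℂ) : Fin N → ℂ :=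
  fun n => if n = p then a else if n = q then b else 0

lemma vm_aux {N : ℕ} {p q : Fin N} (hpq : p ≠ q) (M : Matrix (Fin N) (Fin N) ℂ)
    (a b : ℂ) (n : Fin N) :
    Matrix.vecMul (Svec N p q a b) M n = a * M p n + b * M q n := by
  classical
  simp only [Matrix.vecMul, dotProduct, Svec]
  rw [show (∑ m, (if m = p then a else if m = q then b else 0) * M m n)
      = ∑ m, ((if m = p then a * M p n else 0) + (if m = q then b * M q n else 0)) from
    Finset.sum_congr rfl fun m _ => by
      by_cases h1 : m = p
      · subst h1; simp [hpq]
      · by_cases h2 : m = q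
        · subst h2; simp [h1]
        · simp [h1, h2]]
  rw [Finset.sum_add_distrib, Finset.sum_ite_eq', Finset.sum_ite_eq']
  simp

lemma dp_aux {N : ℕ} {p q : Fin N} (hpq : p ≠ q) (v : Fin N → ℂ) (a b : ℂ) :
    v ⬝ᵥ (Svec N p q a b) = v p * a + v q * b := by
  classical
  simp only [dotProduct, Svec]
  rw [show (∑ m, v m * (if m = p then a else if m = q then b else 0))
      = ∑ m, ((if m = p then v p * a else 0) + (if m = q then v q * b else 0)) from
    Finset.sum_congr rfl fun m _ => by
      by_cases h1 : m = p
      · subst h1; simp [hpq]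
      · by_cases h2 : m = q
        · subst h2; simp [h1]
        · simp [h1, h2]]
  rw [Finset.sum_add_distrib, Finset.sum_ite_eq', Finset.sum_ite_eq']
  simp

lemma sums_aux {N : ℕ} {p q : Fin N} (hpq : p ≠ q) (f : Fin N → ℝ → ℝ → ℂ) (a b : ℂ) :
    (∑ n, f n ((Svec N p q a b) n).re ((Svec N p q a b) n).im)
      + (∑ n, f n ((Svec N p q 0 0) n).re ((Svec N p q 0 0) n).im)
    = (∑ n, f n ((Svec N p q a 0) n).re ((Svec N p q a 0) n).im)
      + (∑ n, f n ((Svec N p q 0 b) n).re ((Svec N p q 0 b) n).im) := by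
  rw [← Finset.sum_add_distrib, ← Finset.sum_add_distrib]
  refine Finset.sum_congr rfl fun n _ => ?_
  unfold Svec
  by_cases h1 : n = p
  · subst h1; simp [hpq]
  · by_cases h2 : n = q
    · subst h2; simp [h1, add_comm]
    · simp [h1, h2]

lemma diagdot {N : ℕ} (M : Matrix (Fin N) (Fin N) ℂ) (hM : M.IsDiag) (u v : Fin N → ℂ) :
    Matrix.vecMul u M ⬝ᵥ v = ∑ n, u n * M n n * v n := by
  simp only [Matrix.vecMul, dotProduct]
  refine Finset.sum_congr rfl fun n _ => ?_
  congr 1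
  exact Finset.sum_eq_single n (fun m _ hm => by rw [hM hm, mul_zero])
    (fun h => absurd (Finset.mem_univ n) h)

lemma symdot {N : ℕ} (M : Matrix (Fin N) (Fin N) ℂ) (u v : Fin N → ℂ) :
    Matrix.vecMul u M ⬝ᵥ v = Matrix.vecMul v Mᵀ ⬝ᵥ u := by
  rw [Matrix.vecMul_transpose, dotProduct_comm (M *ᵥ v) u, Matrix.dotProduct_mulVec]

lemma key_aux {N : ℕ} (A C D : Matrix (Fin N) (Fin N) ℂ) (f : Fin N → ℝ → ℝ → ℂ)
    (hf : ∀ s : Fin N → ℂ,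
      (Matrix.vecMul s A) ⬝ᵥ (fun n => starRingEnd ℂ (s n))
        + (Matrix.vecMul s C) ⬝ᵥ s
        + (Matrix.vecMul (fun n => starRingEnd ℂ (s n)) D) ⬝ᵥ (fun n => starRingEnd ℂ (s n))
        = ∑ n, f n (s n).re (s n).im)
    {p q : Fin N} (hpq : p ≠ q) (a b : ℂ) :
    b * A q p * (starRingEnd ℂ a) + a * A p q * (starRingEnd ℂ b)
      + a * b * (C p q + C q p)
      + (starRingEnd ℂ a) * (starRingEnd ℂ b) * (D p q + D q p) = 0 := by
  have hcs : ∀ x y : ℂ, (fun n => starRingEnd ℂ (Svec N p q x y n))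
      = Svec N p q (starRingEnd ℂ x) (starRingEnd ℂ y) := by
    intro x y
    funext n
    unfold Svec
    by_cases h1 : n = p
    · simp [h1]
    · by_cases h2 : n = q <;> simp [h1, h2, hpq.symm]
  have h1 := hf (Svec N p q a b)
  have h2 := hf (Svec N p q 0 0)
  have h3 := hf (Svec N p q a 0)
  have h4 := hf (Svec N p q 0 b)
  rw [hcs] at h1 h2 h3 h4
  simp only [map_zero, dp_aux hpq, vm_aux hpq] at h1 h2 h3 h4
  have hs := sums_aux hpq f a b
  linear_combination h1 + h2 - h3 - h4 + hs

lemma conj_eq_re_sub_im (z : ℂ) :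
    (starRingEnd ℂ) z = (z.re : ℂ) - (z.im : ℂ) * Complex.I := by
  apply Complex.ext <;> simp

/-- Lemma 2 of the paper. For `N × N` complex matrices `A, C, D`,
the quadratic form `s·A·sᴴ + s·C·sᵀ + s*·D·sᴴ` decomposes as a sum of single-symbol
functions `Σₙ fₙ(x_{nI}, x_{nQ})` for all row vectors `s` if and only if
`A`, `C + Cᵀ` and `D + Dᵀ` are all diagonal. -/
theorem statement0 (N : ℕ) (hN : 0 < N) (A C D : Matrix (Fin N) (Fin N) ℂ) :
    (∃ f : Fin N → ℝ → ℝ → ℂ, ∀ s : Fin N → ℂ,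
      (Matrix.vecMul s A) ⬝ᵥ (fun n => starRingEnd ℂ (s n))
        + (Matrix.vecMul s C) ⬝ᵥ s
        + (Matrix.vecMul (fun n => starRingEnd ℂ (s n)) D) ⬝ᵥ (fun n => starRingEnd ℂ (s n))
        = ∑ n, f n (s n).re (s n).im) ↔
    (A.IsDiag ∧ (C + Cᵀ).IsDiag ∧ (D + Dᵀ).IsDiag) := by
  constructor
  · rintro ⟨f, hf⟩
    have master : ∀ p q : Fin N, p ≠ q →
        A p q = 0 ∧ C p q + C q p = 0 ∧ D p q + D q p = 0 := by
      intro p q hpq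
      have k1 := key_aux A C D f hf hpq 1 1
      have k2 := key_aux A C D f hf hpq 1 Complex.I
      have k3 := key_aux A C D f hf hpq Complex.I 1
      have k4 := key_aux A C D f hf hpq Complex.I Complex.I
      simp only [RingHom.map_one, Complex.conj_I, mul_one, one_mul] at k1 k2 k3 k4
      have e1 : A p q + A q p + (C p q + C q p) + (D p q + D q p) = 0 := by
        linear_combination k1
      have e2 : A q p - A p q + (C p q + C q p) - (D p q + D q p) = 0 := by
        apply mul_left_cancel₀ Complex.I_ne_zero
        linear_combination k2
      have e3 : A p q - A q p + (C p q + C q p) - (D p q + D q p) = 0 := by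
        apply mul_left_cancel₀ Complex.I_ne_zero
        linear_combination k3
      have e4 : A p q + A q p - (C p q + C q p) - (D p q + D q p) = 0 := by
        apply mul_left_cancel₀ Complex.I_ne_zero
        apply mul_left_cancel₀ Complex.I_ne_zero
        linear_combination -k4
      refine ⟨?_, ?_, ?_⟩
      · linear_combination (e1 + e4) / 4 + (e3 - e2) / 4
      · linear_combination (e1 - e4) / 4 + (e2 + e3) / 4
      · linear_combination (e1 - e4) / 4 - (e2 + e3) / 4
    refine ⟨fun p q hpq => (master p q hpq).1,
      fun p q hpq => ?_, fun p q hpq => ?_⟩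
    · simp only [Matrix.add_apply, Matrix.transpose_apply]
      exact (master p q hpq).2.1
    · simp only [Matrix.add_apply, Matrix.transpose_apply]
      exact (master p q hpq).2.2
  · rintro ⟨hA, hC, hD⟩
    refine ⟨fun n x y =>
      A n n * (((x : ℂ) + (y : ℂ) * Complex.I) * ((x : ℂ) - (y : ℂ) * Complex.I))
        + C n n * ((x : ℂ) + (y : ℂ) * Complex.I) ^ 2
        + D n n * ((x : ℂ) - (y : ℂ) * Complex.I) ^ 2, fun s => ?_⟩
    have h2 : Matrix.vecMul s C ⬝ᵥ s = ∑ n, C n n * s n ^ 2 := by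
      have key2 : (2 : ℂ) * (Matrix.vecMul s C ⬝ᵥ s) = 2 * ∑ n, C n n * s n ^ 2 := by
        calc (2 : ℂ) * (Matrix.vecMul s C ⬝ᵥ s)
            = Matrix.vecMul s C ⬝ᵥ s + Matrix.vecMul s Cᵀ ⬝ᵥ s := by
              rw [← symdot]; ring
          _ = Matrix.vecMul s (C + Cᵀ) ⬝ᵥ s := by
              rw [Matrix.vecMul_add, add_dotProduct]
          _ = ∑ n, s n * (C + Cᵀ) n n * s n := diagdot _ hC s s
          _ = 2 * ∑ n, C n n * s n ^ 2 := by
              rw [Finset.mul_sum]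
              refine Finset.sum_congr rfl fun n _ => ?_
              simp only [Matrix.add_apply, Matrix.transpose_apply]
              ring
      exact mul_left_cancel₀ two_ne_zero key2
    have h3 : Matrix.vecMul (fun n => starRingEnd ℂ (s n)) D ⬝ᵥ (fun n => starRingEnd ℂ (s n))
        = ∑ n, D n n * (starRingEnd ℂ (s n)) ^ 2 := by
      have key3 : (2 : ℂ) * (Matrix.vecMul (fun n => starRingEnd ℂ (s n)) D ⬝ᵥ
          (fun n => starRingEnd ℂ (s n)))
          = 2 * ∑ n, D n n * (starRingEnd ℂ (s n)) ^ 2 := by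
        calc (2 : ℂ) * (Matrix.vecMul (fun n => starRingEnd ℂ (s n)) D ⬝ᵥ
            (fun n => starRingEnd ℂ (s n)))
            = Matrix.vecMul (fun n => starRingEnd ℂ (s n)) D ⬝ᵥ (fun n => starRingEnd ℂ (s n))
              + Matrix.vecMul (fun n => starRingEnd ℂ (s n)) Dᵀ ⬝ᵥ
                (fun n => starRingEnd ℂ (s n)) := by
              rw [← symdot]; ring
          _ = Matrix.vecMul (fun n => starRingEnd ℂ (s n)) (D + Dᵀ) ⬝ᵥ
                (fun n => starRingEnd ℂ (s n)) := by
              rw [Matrix.vecMul_add, add_dotProduct]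
          _ = ∑ n, starRingEnd ℂ (s n) * (D + Dᵀ) n n * starRingEnd ℂ (s n) :=
              diagdot _ hD _ _
          _ = 2 * ∑ n, D n n * (starRingEnd ℂ (s n)) ^ 2 := by
              rw [Finset.mul_sum]
              refine Finset.sum_congr rfl fun n _ => ?_
              simp only [Matrix.add_apply, Matrix.transpose_apply]
              ring
      exact mul_left_cancel₀ two_ne_zero key3
    rw [diagdot A hA, h2, h3, ← Finset.sum_add_distrib, ← Finset.sum_add_distrib]
    refine Finset.sum_congr rfl fun n _ => ?_
    simp only [← conj_eq_re_sub_im, Complex.re_add_im]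
    ring
end

section
/- Let N, T be positive integers and let A, B be N×T complex matrices. Suppose that for every column index t ∈ {1,…,T} there is a fixed expression — either 0, or ε·h·v_n, or ε·conj(h)·conj(v_n), for some ε ∈ {1, −1, i, −i} and some n ∈ {1,…,N} — such that for all h ∈ ℂ and all row vectors v ∈ ℂ^{1×N}, the t-th entry of h·(v·A) + conj(h)·(v*·B) equals that expression. Then: (1) every entry of A and of B belongs to {0, 1, −1, i, −i}; (2) A and B have no nonzero entry in the same position; (3) each of A, B, and A + B is column monomial, i.e., has at most one nonzero entry in every column. (This is the paper's Lemma 1: the relay matrices A_k, B_k of a PDSSDC satisfy these conditions.) -/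
open Matrix

/-- A matrix is column monomial if every column has at most one nonzero entry. -/
def Matrix.ColMonomial {m n : Type*} (M : Matrix m n ℂ) : Prop :=
  ∀ j i i', M i j ≠ 0 → M i' j ≠ 0 → i = i'

/-- Lemma 1 of the paper. If every entry of the row
`h·(v·A) + conj(h)·(v*·B)` is identically `0`, `ε·h·vₙ` or `ε·conj(h)·conj(vₙ)` for some
`ε ∈ {1, −1, i, −i}` and some `n`, then the entries of `A` and `B` lie in `{0, 1, −1, i, −i}`,
`A` and `B` have no nonzero entry at the same position, and `A`, `B` and `A + B` are
column monomial. -/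
theorem statement1 (N T : ℕ) (hN : 0 < N) (hT : 0 < T)
    (A B : Matrix (Fin N) (Fin T) ℂ)
    (hyp : ∀ t : Fin T,
      (∀ (h : ℂ) (v : Fin N → ℂ),
        h * Matrix.vecMul v A t
          + starRingEnd ℂ h * Matrix.vecMul (fun n => starRingEnd ℂ (v n)) B t = 0) ∨
      ∃ ε ∈ ({1, -1, Complex.I, -Complex.I} : Set ℂ), ∃ n : Fin N,
        (∀ (h : ℂ) (v : Fin N → ℂ),
          h * Matrix.vecMul v A t
            + starRingEnd ℂ h * Matrix.vecMul (fun n => starRingEnd ℂ (v n)) B t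
            = ε * h * v n) ∨
        (∀ (h : ℂ) (v : Fin N → ℂ),
          h * Matrix.vecMul v A t
            + starRingEnd ℂ h * Matrix.vecMul (fun n => starRingEnd ℂ (v n)) B t
            = ε * starRingEnd ℂ h * starRingEnd ℂ (v n))) :
    (∀ (i : Fin N) (t : Fin T),
        A i t ∈ ({0, 1, -1, Complex.I, -Complex.I} : Set ℂ) ∧
        B i t ∈ ({0, 1, -1, Complex.I, -Complex.I} : Set ℂ)) ∧
    (∀ (i : Fin N) (t : Fin T), ¬(A i t ≠ 0 ∧ B i t ≠ 0)) ∧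
    A.ColMonomial ∧ B.ColMonomial ∧ (A + B).ColMonomial := by
  have eA : ∀ (i : Fin N) (t : Fin T), Matrix.vecMul (Pi.single i (1:ℂ)) A t = A i t := by
    intro i t; simp [Matrix.vecMul, dotProduct, Pi.single_apply]
  have eB : ∀ (i : Fin N) (t : Fin T),
      Matrix.vecMul (fun n => starRingEnd ℂ ((Pi.single i 1 : Fin N → ℂ) n)) B t = B i t := by
    intro i t; simp [Matrix.vecMul, dotProduct, Pi.single_apply, apply_ite]
  have main : ∀ t : Fin T, ∃ n : Fin N, ∃ a b : ℂ,
      a ∈ ({0, 1, -1, Complex.I, -Complex.I} : Set ℂ) ∧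
      b ∈ ({0, 1, -1, Complex.I, -Complex.I} : Set ℂ) ∧
      (a = 0 ∨ b = 0) ∧
      ∀ i : Fin N, A i t = (if i = n then a else 0) ∧ B i t = (if i = n then b else 0) := by
    intro t
    rcases hyp t with h0 | ⟨ε, hε, n, hc | hc⟩
    · refine ⟨⟨0, hN⟩, 0, 0, by simp, by simp, Or.inl rfl, fun i => ?_⟩
      have h1 := h0 1 (Pi.single i 1)
      have hI := h0 Complex.I (Pi.single i 1)
      rw [eA, eB] at h1 hI
      simp only [_root_.map_one, one_mul, Complex.conj_I] at h1 hI
      have hd : A i t - B i t = 0 :=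
        mul_left_cancel₀ Complex.I_ne_zero (by linear_combination hI)
      simp only [ite_self]
      constructor
      · linear_combination (h1 + hd) / 2
      · linear_combination (h1 - hd) / 2
    · refine ⟨n, ε, 0, Or.inr (by simpa using hε), by simp, Or.inr rfl, fun i => ?_⟩
      have h1 := hc 1 (Pi.single i 1)
      have hI := hc Complex.I (Pi.single i 1)
      rw [eA, eB] at h1 hI
      simp only [_root_.map_one, one_mul, Complex.conj_I, Pi.single_apply] at h1 hI
      by_cases hin : i = n
      · subst hin
        simp only [eq_self_iff_true, if_true, if_pos rfl, mul_one] at h1 hI ⊢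
        have hd : A i t - B i t = ε :=
          mul_left_cancel₀ Complex.I_ne_zero (by linear_combination hI)
        constructor
        · linear_combination (h1 + hd) / 2
        · linear_combination (h1 - hd) / 2
      · rw [if_neg (fun e => hin e.symm)] at h1 hI
        rw [if_neg hin, if_neg hin]
        have hd : A i t - B i t = 0 :=
          mul_left_cancel₀ Complex.I_ne_zero (by linear_combination hI)
        constructor
        · linear_combination (h1 + hd) / 2
        · linear_combination (h1 - hd) / 2
    · refine ⟨n, 0, ε, by simp, Or.inr (by simpa using hε), Or.inl rfl, fun i => ?_⟩
      have h1 := hc 1 (Pi.single i 1)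
      have hI := hc Complex.I (Pi.single i 1)
      rw [eA, eB] at h1 hI
      simp only [_root_.map_one, one_mul, Complex.conj_I, Pi.single_apply] at h1 hI
      by_cases hin : i = n
      · subst hin
        simp only [eq_self_iff_true, if_true, if_pos rfl, _root_.map_one, mul_one] at h1 hI ⊢
        have hd : A i t - B i t = -ε :=
          mul_left_cancel₀ Complex.I_ne_zero (by linear_combination hI)
        constructor
        · linear_combination (h1 + hd) / 2
        · linear_combination (h1 - hd) / 2
      · rw [if_neg (fun e => hin e.symm)] at h1 hI
        simp only [map_zero] at h1 hI
        rw [if_neg hin, if_neg hin]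
        have hd : A i t - B i t = 0 :=
          mul_left_cancel₀ Complex.I_ne_zero (by linear_combination hI)
        constructor
        · linear_combination (h1 + hd) / 2
        · linear_combination (h1 - hd) / 2
  refine ⟨?_, ?_, ?_, ?_, ?_⟩
  · intro i t
    obtain ⟨n, a, b, ha, hb, -, hv⟩ := main t
    obtain ⟨hvA, hvB⟩ := hv i
    constructor
    · rw [hvA]; split
      · exact ha
      · exact Set.mem_insert 0 _
    · rw [hvB]; split
      · exact hb
      · exact Set.mem_insert 0 _
  · rintro i t ⟨hA0, hB0⟩
    obtain ⟨n, a, b, -, -, hab, hv⟩ := main t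
    obtain ⟨hvA, hvB⟩ := hv i
    rcases hab with h | h
    · apply hA0; rw [hvA, h]; simp
    · apply hB0; rw [hvB, h]; simp
  · intro t i i' hi hi'
    obtain ⟨n, a, b, -, -, -, hv⟩ := main t
    rw [(hv i).1] at hi; rw [(hv i').1] at hi'
    by_cases h1 : i = n
    · by_cases h2 : i' = n
      · rw [h1, h2]
      · rw [if_neg h2] at hi'; exact absurd rfl hi'
    · rw [if_neg h1] at hi; exact absurd rfl hi
  · intro t i i' hi hi'
    obtain ⟨n, a, b, -, -, -, hv⟩ := main t
    rw [(hv i).2] at hi; rw [(hv i').2] at hi'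
    by_cases h1 : i = n
    · by_cases h2 : i' = n
      · rw [h1, h2]
      · rw [if_neg h2] at hi'; exact absurd rfl hi'
    · rw [if_neg h1] at hi; exact absurd rfl hi
  · intro t i i' hi hi'
    obtain ⟨n, a, b, -, -, -, hv⟩ := main t
    have hs : ∀ j, (A + B) j t = if j = n then a + b else 0 := by
      intro j
      simp only [Matrix.add_apply, (hv j).1, (hv j).2]
      split <;> simp
    rw [hs i] at hi; rw [hs i'] at hi'
    by_cases h1 : i = n
    · by_cases h2 : i' = n
      · rw [h1, h2]
      · rw [if_neg h2] at hi'; exact absurd rfl hi'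
    · rw [if_neg h1] at hi; exact absurd rfl hi
end

section
/- Suppose the code is a unitary RS-PDSSDC. Then for every k ∈ {1,…,K}, the N×N matrix A_k·A_kᴴ + B_k*·B_kᵀ is a diagonal matrix all of whose diagonal entries are strictly positive real numbers. -/
open Matrix

noncomputable section

/-- A distributed code for `K` relays, with `N` information symbols and block length `T`:
precoding matrices `P, Q` used at the source, relay matrices `A k, B k` used at relay `k`,
and the noise-power constant `c > 0` entering the covariance matrix `R`. -/
structure DistCode (N T K : ℕ) where
  c : ℝ
  hc : 0 < c
  P : Matrix (Fin N) (Fin N) ℂ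
  Q : Matrix (Fin N) (Fin N) ℂ
  A : Fin K → Matrix (Fin N) (Fin T) ℂ
  B : Fin K → Matrix (Fin N) (Fin T) ℂ

/-- Entrywise complex conjugate of a matrix (`M*`). -/
def Matrix.cstar {m n : Type*} (M : Matrix m n ℂ) : Matrix m n ℂ :=
  M.map (starRingEnd ℂ)

namespace DistCode

variable {N T K : ℕ}

/-- The precoded vector `s̃ = s·P + s*·Q`. -/
def stilde (C : DistCode N T K) (s : Fin N → ℂ) : Fin N → ℂ :=
  Matrix.vecMul s C.P + Matrix.vecMul (fun n => starRingEnd ℂ (s n)) C.Q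

/-- The codeword `X(h, s)`: its `k`-th row is `h_k·(s̃·A_k) + conj(h_k)·(s̃*·B_k)`. -/
def codeword (C : DistCode N T K) (h : Fin K → ℂ) (s : Fin N → ℂ) :
    Matrix (Fin K) (Fin T) ℂ := fun k t =>
  h k * Matrix.vecMul (C.stilde s) (C.A k) t +
    starRingEnd ℂ (h k) * Matrix.vecMul (fun n => starRingEnd ℂ (C.stilde s n)) (C.B k) t

/-- The noise covariance matrix `R(g) = c·(Σ_k |g_k|²·(A_kᴴA_k + B_kᴴB_k)) + I_T`. -/
def Rmat (C : DistCode N T K) (g : Fin K → ℂ) : Matrix (Fin T) (Fin T) ℂ :=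
  (C.c : ℂ) • (∑ k, (Complex.normSq (g k) : ℂ) •
    ((C.A k)ᴴ * C.A k + (C.B k)ᴴ * C.B k)) + 1

/-- The (whitened) Gram matrix `X(h,s)·R(g)⁻¹·X(h,s)ᴴ`. -/
def gram (C : DistCode N T K) (g h : Fin K → ℂ) (s : Fin N → ℂ) :
    Matrix (Fin K) (Fin K) ℂ :=
  C.codeword h s * (C.Rmat g)⁻¹ * (C.codeword h s)ᴴ

/-- Condition (a) of the PDSSDC definition: each entry of the codeword is identically `0`,
`ε·h_k·s̃_n` or `ε·conj(h_k)·conj(s̃_n)` for some `ε ∈ {1, −1, i, −i}` and some `n`. -/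
def CondA (C : DistCode N T K) : Prop :=
  ∀ (k : Fin K) (t : Fin T),
    (∀ h s, C.codeword h s k t = 0) ∨
    ∃ ε ∈ ({1, -1, Complex.I, -Complex.I} : Set ℂ), ∃ n : Fin N,
      (∀ h s, C.codeword h s k t = ε * h k * C.stilde s n) ∨
      (∀ h s, C.codeword h s k t =
        ε * starRingEnd ℂ (h k) * starRingEnd ℂ (C.stilde s n))

/-- Condition (b) of the PDSSDC definition: for every `g` the Gram matrix decomposes as
`Σ_n W_n(x_{nI}, x_{nQ}, h)` where the `(k,k)` entry of `W_n` is
`|h_k|²·(v¹_{n,k}·x_{nI}² + v²_{n,k}·x_{nQ}²)`. -/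
def CondB (C : DistCode N T K) : Prop :=
  ∀ g : Fin K → ℂ,
    ∃ W : Fin N → ℝ → ℝ → (Fin K → ℂ) → Matrix (Fin K) (Fin K) ℂ,
    ∃ v1 v2 : Fin N → Fin K → ℝ,
      ∀ (h : Fin K → ℂ) (s : Fin N → ℂ),
        C.gram g h s = (∑ n, W n (s n).re (s n).im h) ∧
        ∀ (n : Fin N) (k : Fin K),
          W n (s n).re (s n).im h k k =
            ((Complex.normSq (h k) *
              (v1 n k * (s n).re ^ 2 + v2 n k * (s n).im ^ 2) : ℝ) : ℂ)

/-- A Precoded Distributed Single-Symbol Decodable STBC. -/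
def IsPDSSDC (C : DistCode N T K) : Prop := C.CondA ∧ C.CondB

/-- Rows `k` and `k'` are `R`-non-orthogonal if the `(k,k')` entry of the Gram matrix is not
identically zero as a function of `(g, h, s)`. -/
def RNonOrth (C : DistCode N T K) (k k' : Fin K) : Prop :=
  ¬ ∀ g h s, C.gram g h s k k' = 0

/-- Semi-orthogonality: every row is `R`-non-orthogonal to at most one other row. -/
def SemiOrth (C : DistCode N T K) : Prop :=
  ∀ k k₁ k₂ : Fin K, k₁ ≠ k → k₂ ≠ k →
    C.RNonOrth k k₁ → C.RNonOrth k k₂ → k₁ = k₂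

end DistCode

/-- A matrix is row monomial if every row has at most one nonzero entry. -/
def Matrix.RowMonomial {m n : Type*} (M : Matrix m n ℂ) : Prop :=
  ∀ i j j', M i j ≠ 0 → M i j' ≠ 0 → j = j'

namespace DistCode

variable {N T K : ℕ}

/-- Row monomial code: each relay matrix `A_k`, `B_k` is row monomial. -/
def RowMonomialCode (C : DistCode N T K) : Prop :=
  ∀ k, (C.A k).RowMonomial ∧ (C.B k).RowMonomial

/-- The weight matrix of `x_{nI}`: `Φ_{nI}(h) = X(h, eₙ)`. -/
def PhiI (C : DistCode N T K) (n : Fin N) (h : Fin K → ℂ) : Matrix (Fin K) (Fin T) ℂ :=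
  C.codeword h (Pi.single n 1)

/-- The weight matrix of `x_{nQ}`: `Φ_{nQ}(h) = X(h, i·eₙ)`. -/
def PhiQ (C : DistCode N T K) (n : Fin N) (h : Fin K → ℂ) : Matrix (Fin K) (Fin T) ℂ :=
  C.codeword h (Pi.single n Complex.I)

/-- Unitary code: for every channel vector `h` with nonzero entries, the matrices
`Φ_{nI}(h)·Φ_{nI}(h)ᴴ` and `Φ_{nQ}(h)·Φ_{nQ}(h)ᴴ` are diagonal with strictly positive
(real) diagonal entries. -/
def Unitary (C : DistCode N T K) : Prop :=
  ∀ h : Fin K → ℂ, (∀ k, h k ≠ 0) → ∀ n : Fin N,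
    ((C.PhiI n h * (C.PhiI n h)ᴴ).IsDiag ∧
      ∀ k, 0 < ((C.PhiI n h * (C.PhiI n h)ᴴ) k k).re ∧
        ((C.PhiI n h * (C.PhiI n h)ᴴ) k k).im = 0) ∧
    ((C.PhiQ n h * (C.PhiQ n h)ᴴ).IsDiag ∧
      ∀ k, 0 < ((C.PhiQ n h * (C.PhiQ n h)ᴴ) k k).re ∧
        ((C.PhiQ n h * (C.PhiQ n h)ᴴ) k k).im = 0)

/-- A unitary row-monomial semi-orthogonal PDSSDC (unitary RS-PDSSDC). -/
def IsUnitaryRSPDSSDC (C : DistCode N T K) : Prop :=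
  C.IsPDSSDC ∧ C.SemiOrth ∧ C.RowMonomialCode ∧ C.Unitary

end DistCode


private lemma decouple_aux (phi psi a b : ℂ)
    (h1 : phi + psi = a + b)
    (h2 : Complex.I * phi + (-Complex.I) * psi = Complex.I * a + (-Complex.I) * b) :
    phi = a ∧ psi = b := by
  have h3 : phi - psi = a - b := by
    have h4 : Complex.I * (phi - psi) = Complex.I * (a - b) := by ring_nf; linear_combination h2
    exact mul_left_cancel₀ Complex.I_ne_zero h4
  constructor
  · linear_combination h1 / 2 + h3 / 2
  · linear_combination h1 / 2 - h3 / 2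

/-- The precoding map `s ↦ s̃` as an `ℝ`-linear endomorphism of `ℂ^N`. -/
private def stL {N T K : ℕ} (C : DistCode N T K) : (Fin N → ℂ) →ₗ[ℝ] (Fin N → ℂ) where
  toFun := C.stilde
  map_add' x y := by
    funext m
    simp only [DistCode.stilde, Matrix.vecMul, dotProduct, Pi.add_apply, map_add,
      add_mul, Finset.sum_add_distrib]
    ring
  map_smul' r x := by
    funext m
    simp only [DistCode.stilde, Matrix.vecMul, dotProduct, Pi.smul_apply,
      Complex.real_smul, _root_.map_mul, Complex.conj_ofReal, RingHom.id_apply,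
      Pi.add_apply, mul_assoc, ← Finset.mul_sum, mul_add]

/-- Equation (14) of the paper. For a unitary RS-PDSSDC, each matrix
`A_k·A_kᴴ + B_k*·B_kᵀ` is diagonal with strictly positive real diagonal entries. -/
theorem statement7 {N T K : ℕ} (hN : 0 < N) (hT : 0 < T) (hK : 0 < K)
    (C : DistCode N T K) (hC : C.IsUnitaryRSPDSSDC) (k : Fin K) :
    (C.A k * (C.A k)ᴴ + (C.B k).cstar * (C.B k)ᵀ).IsDiag ∧
    ∀ n : Fin N,
      0 < ((C.A k * (C.A k)ᴴ + (C.B k).cstar * (C.B k)ᵀ) n n).re ∧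
      ((C.A k * (C.A k)ᴴ + (C.B k).cstar * (C.B k)ᵀ) n n).im = 0 := by
  classical
  obtain ⟨⟨hA, hB⟩, _hSemi, _hRM, hU⟩ := hC
  -- Step 1: classification of columns (for the fixed relay k)
  have hclass : ∀ t : Fin T, ∃ (ε : ℂ) (n : Fin N),
      ((∀ s, Matrix.vecMul (C.stilde s) (C.A k) t = ε * C.stilde s n) ∧
        (∀ s, Matrix.vecMul (fun m => starRingEnd ℂ (C.stilde s m)) (C.B k) t = 0)) ∨
      ((∀ s, Matrix.vecMul (C.stilde s) (C.A k) t = 0) ∧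
        (∀ s, Matrix.vecMul (fun m => starRingEnd ℂ (C.stilde s m)) (C.B k) t =
          ε * starRingEnd ℂ (C.stilde s n))) := by
    intro t
    rcases hA k t with h0 | ⟨ε, hε, n, hf | hf⟩
    · refine ⟨0, ⟨0, hN⟩, Or.inl ⟨fun s => ?_, fun s => ?_⟩⟩ <;>
      · have h1 := h0 (Pi.single k 1) s
        have h2 := h0 (Pi.single k Complex.I) s
        simp only [DistCode.codeword, Pi.single_eq_same, _root_.map_one, one_mul,
          Complex.conj_I] at h1 h2
        have hd := decouple_aux (Matrix.vecMul (C.stilde s) (C.A k) t)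
          (Matrix.vecMul (fun m => starRingEnd ℂ (C.stilde s m)) (C.B k) t) 0 0
          (by linear_combination h1) (by linear_combination h2)
        first
          | simpa using hd.1
          | exact hd.2
    · refine ⟨ε, n, Or.inl ⟨fun s => ?_, fun s => ?_⟩⟩ <;>
      · have h1 := hf (Pi.single k 1) s
        have h2 := hf (Pi.single k Complex.I) s
        simp only [DistCode.codeword, Pi.single_eq_same, _root_.map_one, one_mul,
          mul_one, Complex.conj_I] at h1 h2
        have hd := decouple_aux (Matrix.vecMul (C.stilde s) (C.A k) t)
          (Matrix.vecMul (fun m => starRingEnd ℂ (C.stilde s m)) (C.B k) t)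
          (ε * C.stilde s n) 0
          (by linear_combination h1) (by linear_combination h2)
        first
          | exact hd.1
          | exact hd.2
    · refine ⟨ε, n, Or.inr ⟨fun s => ?_, fun s => ?_⟩⟩ <;>
      · have h1 := hf (Pi.single k 1) s
        have h2 := hf (Pi.single k Complex.I) s
        simp only [DistCode.codeword, Pi.single_eq_same, _root_.map_one, one_mul,
          mul_one, Complex.conj_I] at h1 h2
        have hd := decouple_aux (Matrix.vecMul (C.stilde s) (C.A k) t)
          (Matrix.vecMul (fun m => starRingEnd ℂ (C.stilde s m)) (C.B k) t)
          0 (ε * starRingEnd ℂ (C.stilde s n))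
          (by linear_combination h1) (by linear_combination h2)
        first
          | exact hd.1
          | exact hd.2
  choose eps nn hPQ using hclass
  -- Step 2: norm of each codeword entry in row k
  have hXe : ∀ (h : Fin K → ℂ) (s : Fin N → ℂ) (t : Fin T),
      Complex.normSq (C.codeword h s k t) =
        Complex.normSq (h k) * (Complex.normSq (eps t) *
          Complex.normSq (C.stilde s (nn t))) := by
    intro h s t
    rcases hPQ t with ⟨h1, h2⟩ | ⟨h1, h2⟩
    · have hc : C.codeword h s k t = h k * (eps t * C.stilde s (nn t)) := by
        simp only [DistCode.codeword, h1 s, h2 s, mul_zero, add_zero]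
      rw [hc, Complex.normSq_mul, Complex.normSq_mul]
    · have hc : C.codeword h s k t =
          starRingEnd ℂ (h k) * (eps t * starRingEnd ℂ (C.stilde s (nn t))) := by
        simp only [DistCode.codeword, h1 s, h2 s, mul_zero, zero_add]
      rw [hc, Complex.normSq_mul, Complex.normSq_mul, Complex.normSq_conj,
        Complex.normSq_conj]
  have hGram : ∀ (h : Fin K → ℂ) (s : Fin N → ℂ),
      (C.codeword h s * (C.codeword h s)ᴴ) k k =
        ((Complex.normSq (h k) * ∑ t, Complex.normSq (eps t) *
          Complex.normSq (C.stilde s (nn t)) : ℝ) : ℂ) := by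
    intro h s
    rw [Matrix.mul_apply]
    push_cast [Finset.mul_sum]
    refine Finset.sum_congr rfl fun t _ => ?_
    rw [Matrix.conjTranspose_apply]
    have hstar : star (C.codeword h s k t) = starRingEnd ℂ (C.codeword h s k t) := rfl
    rw [hstar, Complex.mul_conj, hXe h s t]
    push_cast
    ring
  set q : (Fin N → ℂ) → ℝ := fun s => ∑ t, Complex.normSq (eps t) *
    Complex.normSq (C.stilde s (nn t)) with hqdef
  -- Step 3: condition (b) at g = 0
  have hR0 : C.Rmat (0 : Fin K → ℂ) = 1 := by
    simp [DistCode.Rmat]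
  obtain ⟨W, v1, v2, hW⟩ := hB 0
  have hident : ∀ s : Fin N → ℂ,
      q s = ∑ n, (v1 n k * (s n).re ^ 2 + v2 n k * (s n).im ^ 2) := by
    intro s
    obtain ⟨hWsum, hWdiag⟩ := hW (Pi.single k 1) s
    have hg : ((q s : ℝ) : ℂ) = C.gram 0 (Pi.single k 1) s k k := by
      unfold DistCode.gram
      rw [hR0, inv_one, Matrix.mul_one, hGram, Pi.single_eq_same, Complex.normSq_one,
        one_mul]
    rw [hWsum] at hg
    have h4 : ((q s : ℝ) : ℂ) =
        ((∑ n, (v1 n k * (s n).re ^ 2 + v2 n k * (s n).im ^ 2) : ℝ) : ℂ) := by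
      rw [hg]
      simp only [Matrix.sum_apply]
      push_cast
      refine Finset.sum_congr rfl fun n _ => ?_
      rw [hWdiag n k, Pi.single_eq_same, Complex.normSq_one, one_mul]
      push_cast
      ring
    exact_mod_cast h4
  -- Step 4: unitarity gives positivity of q at the singles
  have hUq1 : ∀ n : Fin N, 0 < q (Pi.single n 1) := by
    intro n
    have hpos := ((hU (fun _ => 1) (fun _ => one_ne_zero) n).1.2 k).1
    have heq : C.PhiI n (fun _ => 1) = C.codeword (fun _ => 1) (Pi.single n 1) := rfl
    rw [heq, hGram (fun _ => 1) (Pi.single n 1)] at hpos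
    simpa using hpos
  have hUq2 : ∀ n : Fin N, 0 < q (Pi.single n Complex.I) := by
    intro n
    have hpos := ((hU (fun _ => 1) (fun _ => one_ne_zero) n).2.2 k).1
    have heq : C.PhiQ n (fun _ => 1) = C.codeword (fun _ => 1) (Pi.single n Complex.I) := rfl
    rw [heq, hGram (fun _ => 1) (Pi.single n Complex.I)] at hpos
    simpa using hpos
  have hv1 : ∀ n, 0 < v1 n k := by
    intro n
    have h := hident (Pi.single n 1)
    have hsum : ∑ m, (v1 m k * ((Pi.single n 1 : Fin N → ℂ) m).re ^ 2 +
        v2 m k * ((Pi.single n 1 : Fin N → ℂ) m).im ^ 2) = v1 n k := by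
      rw [Finset.sum_eq_single n (fun m _ hm => by
          rw [Pi.single_eq_of_ne hm]; simp)
        (fun hcon => absurd (Finset.mem_univ n) hcon)]
      rw [Pi.single_eq_same]
      simp
    rw [← hsum, ← h]
    exact hUq1 n
  have hv2 : ∀ n, 0 < v2 n k := by
    intro n
    have h := hident (Pi.single n Complex.I)
    have hsum : ∑ m, (v1 m k * ((Pi.single n Complex.I : Fin N → ℂ) m).re ^ 2 +
        v2 m k * ((Pi.single n Complex.I : Fin N → ℂ) m).im ^ 2) = v2 n k := by
      rw [Finset.sum_eq_single n (fun m _ hm => by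
          rw [Pi.single_eq_of_ne hm]; simp)
        (fun hcon => absurd (Finset.mem_univ n) hcon)]
      rw [Pi.single_eq_same]
      simp
    rw [← hsum, ← h]
    exact hUq2 n
  -- Step 5: q is positive definite
  have hqpos : ∀ s : Fin N → ℂ, s ≠ 0 → 0 < q s := by
    intro s hs
    obtain ⟨n, hn⟩ := Function.ne_iff.mp hs
    rw [hident]
    refine Finset.sum_pos' (fun m _ => add_nonneg
      (mul_nonneg (hv1 m).le (sq_nonneg _)) (mul_nonneg (hv2 m).le (sq_nonneg _)))
      ⟨n, Finset.mem_univ n, ?_⟩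
    have hne : (s n).re ≠ 0 ∨ (s n).im ≠ 0 := by
      by_contra hcon
      push_neg at hcon
      exact hn (Complex.ext hcon.1 hcon.2)
    rcases hne with hre | him
    · have h1 : 0 < (s n).re ^ 2 := (sq_nonneg _).lt_of_ne' (pow_ne_zero 2 hre)
      nlinarith [mul_pos (hv1 n) h1, mul_nonneg (hv2 n).le (sq_nonneg (s n).im)]
    · have h1 : 0 < (s n).im ^ 2 := (sq_nonneg _).lt_of_ne' (pow_ne_zero 2 him)
      nlinarith [mul_pos (hv2 n) h1, mul_nonneg (hv1 n).le (sq_nonneg (s n).re)]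
  -- Step 6: the precoding map is bijective
  have hinj : Function.Injective (stL C) := by
    rw [injective_iff_map_eq_zero]
    intro s hs0
    by_contra hs
    have hpos := hqpos s hs
    have hq0 : q s = 0 := by
      rw [hqdef]
      refine Finset.sum_eq_zero fun t _ => ?_
      have hz : C.stilde s (nn t) = 0 := by
        have := congrFun hs0 (nn t)
        simpa [stL] using this
      rw [hz]
      simp
    rw [hq0] at hpos
    exact lt_irrefl 0 hpos
  have hsurj : Function.Surjective (stL C) := LinearMap.injective_iff_surjective.mp hinj
  -- Step 7: columns of A and B are determined
  have hvec : ∀ (m : Fin N) (M : Matrix (Fin N) (Fin T) ℂ) (t : Fin T),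
      Matrix.vecMul (Pi.single m (1:ℂ)) M t = M m t := by
    intro m M t
    simp [Matrix.vecMul, dotProduct, Pi.single_apply]
  have hcol : ∀ t : Fin T,
      ((∀ m, C.A k m t = if nn t = m then eps t else 0) ∧ (∀ m, C.B k m t = 0)) ∨
      ((∀ m, C.A k m t = 0) ∧ (∀ m, C.B k m t = if nn t = m then eps t else 0)) := by
    intro t
    have key : ∀ m : Fin N, ∃ s : Fin N → ℂ,
        C.stilde s = Pi.single m 1 ∧
        (fun j => starRingEnd ℂ (C.stilde s j)) = (Pi.single m 1 : Fin N → ℂ) := by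
      intro m
      obtain ⟨s, hs⟩ := hsurj (Pi.single m 1)
      have hst : C.stilde s = Pi.single m 1 := hs
      refine ⟨s, hst, ?_⟩
      funext j
      rw [congrFun hst j]
      rcases eq_or_ne j m with h | h
      · subst h
        simp
      · rw [Pi.single_eq_of_ne h]
        simp
    rcases hPQ t with ⟨h1, h2⟩ | ⟨h1, h2⟩
    · left
      constructor
      · intro m
        obtain ⟨s, hst, hstc⟩ := key m
        have hh := h1 s
        rw [hst, hvec m] at hh
        rw [hh]
        rcases eq_or_ne (nn t) m with h | h
        · subst h
          simp
        · rw [Pi.single_eq_of_ne h, if_neg h, mul_zero]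
      · intro m
        obtain ⟨s, hst, hstc⟩ := key m
        have hh := h2 s
        rw [hstc, hvec m] at hh
        exact hh
    · right
      constructor
      · intro m
        obtain ⟨s, hst, hstc⟩ := key m
        have hh := h1 s
        rw [hst, hvec m] at hh
        exact hh
      · intro m
        obtain ⟨s, hst, hstc⟩ := key m
        have hh := h2 s
        rw [hstc, hvec m, congrFun hst (nn t)] at hh
        rw [hh]
        rcases eq_or_ne (nn t) m with h | h
        · subst h
          simp
        · rw [Pi.single_eq_of_ne h, if_neg h]
          simp
  -- entries of the matrix in question
  have hMentry : ∀ n n' : Fin N,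
      (C.A k * (C.A k)ᴴ + (C.B k).cstar * (C.B k)ᵀ) n n' =
        ∑ t, (C.A k n t * starRingEnd ℂ (C.A k n' t) +
          starRingEnd ℂ (C.B k n t) * C.B k n' t) := by
    intro n n'
    rw [Matrix.add_apply, Matrix.mul_apply, Matrix.mul_apply, ← Finset.sum_add_distrib]
    refine Finset.sum_congr rfl fun t _ => ?_
    simp only [Matrix.conjTranspose_apply, Matrix.transpose_apply, Matrix.cstar,
      Matrix.map_apply]
    rfl
  constructor
  · -- diagonality
    intro n n' hne
    rw [hMentry]
    refine Finset.sum_eq_zero fun t _ => ?_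
    rcases hcol t with ⟨ha, hb⟩ | ⟨ha, hb⟩ <;>
    · rw [ha n, ha n', hb n, hb n']
      rcases eq_or_ne (nn t) n with h | h
      · have hn' : nn t ≠ n' := fun hc => hne (h ▸ hc ▸ rfl)
        rw [if_pos h, if_neg hn']
        simp
      · rw [if_neg h]
        simp
  · -- diagonal entries
    intro n
    have hcast : (C.A k * (C.A k)ᴴ + (C.B k).cstar * (C.B k)ᵀ) n n =
        ((∑ t, (Complex.normSq (C.A k n t) + Complex.normSq (C.B k n t)) : ℝ) : ℂ) := by
      rw [hMentry]
      push_cast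
      refine Finset.sum_congr rfl fun t _ => ?_
      rw [mul_comm (starRingEnd ℂ (C.B k n t)) (C.B k n t), Complex.mul_conj,
        Complex.mul_conj]
    have hex : ∃ t : Fin T, eps t ≠ 0 ∧ nn t = n := by
      by_contra hno
      push_neg at hno
      set F : (Fin N → ℂ) →ₗ[ℝ] ({m : Fin N // m ≠ n} → ℂ) :=
        (LinearMap.funLeft ℝ ℂ (Subtype.val)).comp (stL C) with hFdef
      have hnotinj : ¬ Function.Injective F := by
        intro hinjF
        have hle := LinearMap.finrank_le_finrank_of_injective hinjF
        have hr1 : Module.finrank ℝ (Fin N → ℂ) = N * 2 := by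
          rw [Module.finrank_pi_fintype ℝ]
          simp [Complex.finrank_real_complex]
        have hr2 : Module.finrank ℝ ({m : Fin N // m ≠ n} → ℂ) = (N - 1) * 2 := by
          rw [Module.finrank_pi_fintype ℝ]
          have hcard : Fintype.card {m : Fin N // m ≠ n} = N - 1 := by simp
          simp [Complex.finrank_real_complex, hcard]
        rw [hr1, hr2] at hle
        omega
      obtain ⟨s1, s2, hFeq, hne12⟩ := Function.not_injective_iff.mp hnotinj
      have hs : s1 - s2 ≠ 0 := sub_ne_zero.mpr hne12
      have hFs : F (s1 - s2) = 0 := by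
        rw [map_sub, hFeq, sub_self]
      have hzero : ∀ m : Fin N, m ≠ n → C.stilde (s1 - s2) m = 0 := by
        intro m hm
        have := congrFun hFs ⟨m, hm⟩
        simpa [hFdef, LinearMap.funLeft_apply, stL] using this
      have hq0 : q (s1 - s2) = 0 := by
        rw [hqdef]
        refine Finset.sum_eq_zero fun t _ => ?_
        rcases eq_or_ne (eps t) 0 with h | h
        · simp [h]
        · rw [hzero (nn t) (hno t h)]
          simp
      have := hqpos _ hs
      rw [hq0] at this
      exact lt_irrefl 0 this
    obtain ⟨t0, hteps, htn⟩ := hex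
    have hsumpos : 0 < ∑ t, (Complex.normSq (C.A k n t) + Complex.normSq (C.B k n t)) := by
      refine Finset.sum_pos' (fun t _ => add_nonneg (Complex.normSq_nonneg _)
        (Complex.normSq_nonneg _)) ⟨t0, Finset.mem_univ t0, ?_⟩
      rcases hcol t0 with ⟨ha, hb⟩ | ⟨ha, hb⟩ <;>
      · rw [ha n, hb n, if_pos htn]
        simpa using Complex.normSq_pos.mpr hteps
    rw [hcast]
    constructor
    · simpa using hsumpos
    · simp
end
end

section
/- Suppose the code is a unitary RS-PDSSDC and let k ≠ k' be indices in {1,…,K} such that rows k and k' are R-orthogonal. Then A_k·A_{k'}ᴴ = 0 and B_k*·B_{k'}ᵀ = 0, i.e., A_k and A_{k'} have no nonzero entries in the same column, and likewise B_k and B_{k'}. -/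
open Matrix

noncomputable section

namespace S11Aux


local notation "c'" => starRingEnd ℂ

/-- Four-point separation: from vanishing of the mixed sums for all `u v`,
get vanishing of the pure `φφ'` and `ψψ'` parts. -/
lemma pair_zero {T : ℕ} (φ ψ φ' ψ' : Fin T → ℂ)
    (H : ∀ u v : ℂ, ∑ t, (u * φ t + c' u * ψ t) *
        (c' v * c' (φ' t) + v * c' (ψ' t)) = 0) :
    (∑ t, φ t * c' (φ' t)) = 0 ∧ (∑ t, ψ t * c' (ψ' t)) = 0 := by
  set Sa := ∑ t, φ t * c' (φ' t) with hSa
  set Sb := ∑ t, φ t * c' (ψ' t) with hSb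
  set Sc := ∑ t, ψ t * c' (φ' t) with hSc
  set Sd := ∑ t, ψ t * c' (ψ' t) with hSd
  have hexp : ∀ u v : ℂ,
      u * c' v * Sa + u * v * Sb + c' u * c' v * Sc + c' u * v * Sd = 0 := by
    intro u v
    have h := H u v
    have e : (∑ t, (u * φ t + c' u * ψ t) * (c' v * c' (φ' t) + v * c' (ψ' t)))
        = u * c' v * Sa + u * v * Sb + c' u * c' v * Sc + c' u * v * Sd := by
      rw [hSa, hSb, hSc, hSd, Finset.mul_sum, Finset.mul_sum, Finset.mul_sum,
        Finset.mul_sum, ← Finset.sum_add_distrib, ← Finset.sum_add_distrib,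
        ← Finset.sum_add_distrib]
      exact Finset.sum_congr rfl fun t _ => by ring
    rw [e] at h
    exact h
  have e11 := hexp 1 1
  have eI1 := hexp Complex.I 1
  have e1I := hexp 1 Complex.I
  have eII := hexp Complex.I Complex.I
  simp only [RingHom.map_one, Complex.conj_I] at e11 eI1 e1I eII
  constructor
  · linear_combination (1/4 : ℂ) * e11 - (Complex.I/4) * eI1 + (Complex.I/4) * e1I
      + (1/4 : ℂ) * eII + ((3/4 : ℂ) * Sa - (1/4 : ℂ) * (Sb + Sc + Sd)) * Complex.I_sq
  · linear_combination (1/4 : ℂ) * e11 + (Complex.I/4) * eI1 - (Complex.I/4) * e1I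
      + (1/4 : ℂ) * eII + ((3/4 : ℂ) * Sd - (1/4 : ℂ) * (Sa + Sb + Sc)) * Complex.I_sq

/-- From vanishing of the quadratic form `v ↦ Σ_t (v·M)_t conj((v·M')_t)` for all `v`,
each "entry sum" vanishes. -/
lemma entry_zero {N T : ℕ} (M M' : Matrix (Fin N) (Fin T) ℂ)
    (H : ∀ v : Fin N → ℂ, ∑ t, (Matrix.vecMul v M t) * c' (Matrix.vecMul v M' t) = 0)
    (i j : Fin N) : ∑ t, M i t * c' (M' j t) = 0 := by
  set Gaa := ∑ t, M i t * c' (M' i t) with hGaa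
  set Gab := ∑ t, M i t * c' (M' j t) with hGab
  set Gba := ∑ t, M j t * c' (M' i t) with hGba
  set Gbb := ∑ t, M j t * c' (M' j t) with hGbb
  have hexp : ∀ cd : ℂ × ℂ,
      cd.1 * c' cd.1 * Gaa + cd.1 * c' cd.2 * Gab + cd.2 * c' cd.1 * Gba
        + cd.2 * c' cd.2 * Gbb = 0 := by
    rintro ⟨c, d⟩
    have h := H (Pi.single i c + Pi.single j d)
    simp only [Matrix.add_vecMul, Matrix.single_vecMul, Pi.add_apply, _root_.map_add,
      _root_.map_mul, Pi.smul_apply, smul_eq_mul, Matrix.row_apply] at h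
    have e : (∑ x, (c * M i x + d * M j x) *
        (c' c * c' (M' i x) + c' d * c' (M' j x)))
        = c * c' c * Gaa + c * c' d * Gab + d * c' c * Gba + d * c' d * Gbb := by
      rw [hGaa, hGab, hGba, hGbb, Finset.mul_sum, Finset.mul_sum, Finset.mul_sum,
        Finset.mul_sum, ← Finset.sum_add_distrib, ← Finset.sum_add_distrib,
        ← Finset.sum_add_distrib]
      exact Finset.sum_congr rfl fun t _ => by ring
    rw [e] at h
    exact h
  have e1 := hexp (1, 0)
  have e2 := hexp (0, 1)
  have e3 := hexp (1, 1)
  have e4 := hexp (1, Complex.I)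
  simp only [RingHom.map_one, RingHom.map_zero, Complex.conj_I] at e1 e2 e3 e4
  linear_combination (-(1/2 : ℂ) - Complex.I/2) * e1 + (-(1/2 : ℂ) - Complex.I/2) * e2
    + (1/2 : ℂ) * e3 + (Complex.I/2) * e4
    + ((1/2 : ℂ) * Gab - (1/2 : ℂ) * Gba + (Complex.I/2) * Gbb) * Complex.I_sq

end S11Aux

section S11Main

local notation "c''" => starRingEnd ℂ

variable {N T K : ℕ}

/-- The precoding map `s ↦ s̃` as an `ℝ`-linear endomorphism. -/
def stildeLin (C : DistCode N T K) : (Fin N → ℂ) →ₗ[ℝ] (Fin N → ℂ) where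
  toFun s := C.stilde s
  map_add' s s' := by
    have h : (fun n => c'' ((s + s') n)) = (fun n => c'' (s n)) + (fun n => c'' (s' n)) := by
      funext n; simp
    simp only [DistCode.stilde, h, Matrix.add_vecMul]
    funext j
    simp only [Pi.add_apply]
    ring
  map_smul' r s := by
    have h : (fun n => c'' ((r • s) n)) = r • (fun n => c'' (s n)) := by
      funext n
      simp [Complex.real_smul, _root_.map_mul, Complex.conj_ofReal]
    simp only [DistCode.stilde, h, RingHom.id_apply]
    rw [Matrix.smul_vecMul, Matrix.smul_vecMul]
    funext j
    simp only [Pi.add_apply, Pi.smul_apply]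
    rw [smul_add]

end S11Main

/-- Lemma 3 of the paper, adapted. For a unitary RS-PDSSDC with
`R`-orthogonal rows `k ≠ k'`, we have `A_k·A_{k'}ᴴ = 0` and `B_k*·B_{k'}ᵀ = 0`; equivalently,
`A_k` and `A_{k'}` have no nonzero entries in the same column, and likewise `B_k`, `B_{k'}`. -/
theorem statement11 {N T K : ℕ} (hN : 0 < N) (hT : 0 < T) (hK : 0 < K)
    (C : DistCode N T K) (hC : C.IsUnitaryRSPDSSDC)
    (k k' : Fin K) (hkk : k ≠ k') (horth : ¬ C.RNonOrth k k') :
    C.A k * (C.A k')ᴴ = 0 ∧ (C.B k).cstar * (C.B k')ᵀ = 0 ∧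
    (∀ (t : Fin T) (i i' : Fin N), C.A k i t ≠ 0 → C.A k' i' t = 0) ∧
    (∀ (t : Fin T) (i i' : Fin N), C.B k i t ≠ 0 → C.B k' i' t = 0) := by
  obtain ⟨⟨hCondA, hCondB⟩, hsemi, hrowmono, hunit⟩ := hC
  obtain ⟨W, v1, v2, hW⟩ := hCondB 0
  have hR0 : C.Rmat 0 = 1 := by
    simp [DistCode.Rmat]
  have hgram0 : ∀ (h : Fin K → ℂ) (s : Fin N → ℂ),
      C.gram 0 h s = C.codeword h s * (C.codeword h s)ᴴ := by
    intro h s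
    rw [DistCode.gram, hR0, inv_one, Matrix.mul_one]
  have hone : ∀ j : Fin K, (fun _ : Fin K => (1:ℂ)) j ≠ 0 := fun j => one_ne_zero
  have hv1 : ∀ n, 0 < v1 n k := by
    intro n
    have hdiag : C.gram 0 (fun _ => 1) (Pi.single n 1) k k = ((v1 n k : ℝ) : ℂ) := by
      rw [(hW (fun _ => 1) (Pi.single n 1)).1, Matrix.sum_apply]
      rw [Finset.sum_eq_single n ?side ?notmem]
      case side =>
        intro m _ hmn
        rw [(hW (fun _ => 1) (Pi.single n 1)).2 m k]
        simp [Pi.single_eq_of_ne hmn]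
      case notmem => intro hn; exact absurd (Finset.mem_univ n) hn
      rw [(hW (fun _ => 1) (Pi.single n 1)).2 n k]
      simp [Complex.normSq_one]
    have hu := ((hunit (fun _ => 1) hone n).1.2 k).1
    rw [show C.PhiI n (fun _ => 1) * (C.PhiI n (fun _ => 1))ᴴ
        = C.gram 0 (fun _ => 1) (Pi.single n 1) from (hgram0 _ _).symm] at hu
    rw [hdiag] at hu
    simpa using hu
  have hv2 : ∀ n, 0 < v2 n k := by
    intro n
    have hdiag : C.gram 0 (fun _ => 1) (Pi.single n Complex.I) k k = ((v2 n k : ℝ) : ℂ) := by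
      rw [(hW (fun _ => 1) (Pi.single n Complex.I)).1, Matrix.sum_apply]
      rw [Finset.sum_eq_single n ?side ?notmem]
      case side =>
        intro m _ hmn
        rw [(hW (fun _ => 1) (Pi.single n Complex.I)).2 m k]
        simp [Pi.single_eq_of_ne hmn]
      case notmem => intro hn; exact absurd (Finset.mem_univ n) hn
      rw [(hW (fun _ => 1) (Pi.single n Complex.I)).2 n k]
      simp [Complex.normSq_one]
    have hu := ((hunit (fun _ => 1) hone n).2.2 k).1
    rw [show C.PhiQ n (fun _ => 1) * (C.PhiQ n (fun _ => 1))ᴴ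
        = C.gram 0 (fun _ => 1) (Pi.single n Complex.I) from (hgram0 _ _).symm] at hu
    rw [hdiag] at hu
    simpa using hu
  -- injectivity of stilde
  have hinj : ∀ s, C.stilde s = 0 → s = 0 := by
    intro s h0
    have h0' : ∀ m, C.stilde s m = 0 := fun m => congrFun h0 m
    have hcw : C.codeword (fun _ => (1:ℂ)) s = 0 := by
      funext κ t
      simp [DistCode.codeword, Matrix.vecMul, dotProduct, h0']
    have hg : C.gram 0 (fun _ => 1) s = 0 := by
      rw [hgram0, hcw]; simp
    have hzero : ∑ n, (Complex.normSq 1 * (v1 n k * (s n).re^2 + v2 n k * (s n).im^2) : ℝ) = 0 := by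
      have h1 : (0:ℂ) = ∑ n, ((Complex.normSq 1 * (v1 n k * (s n).re^2 + v2 n k * (s n).im^2) : ℝ) : ℂ) := by
        calc (0:ℂ) = C.gram 0 (fun _ => 1) s k k := by rw [hg]; simp
        _ = ∑ n, W n ((s n).re) ((s n).im) (fun _ => 1) k k := by
              rw [(hW (fun _ => 1) s).1, Matrix.sum_apply]
        _ = ∑ n, ((Complex.normSq 1 * (v1 n k * (s n).re^2 + v2 n k * (s n).im^2) : ℝ) : ℂ) :=
              Finset.sum_congr rfl fun n _ => (hW (fun _ => 1) s).2 n k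
      rw [← Complex.ofReal_sum] at h1
      exact_mod_cast h1.symm
    simp only [Complex.normSq_one, one_mul] at hzero
    have hterm := (Finset.sum_eq_zero_iff_of_nonneg (fun n _ =>
      add_nonneg (mul_nonneg (hv1 n).le (sq_nonneg _)) (mul_nonneg (hv2 n).le (sq_nonneg _)))).mp hzero
    funext n
    have hn := hterm n (Finset.mem_univ n)
    have hre2 : (s n).re ^ 2 = 0 := by nlinarith [sq_nonneg (s n).re, sq_nonneg (s n).im, hv1 n, hv2 n]
    have him2 : (s n).im ^ 2 = 0 := by nlinarith [sq_nonneg (s n).re, sq_nonneg (s n).im, hv1 n, hv2 n]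
    have hre := pow_eq_zero_iff (two_ne_zero) |>.mp hre2
    have him := pow_eq_zero_iff (two_ne_zero) |>.mp him2
    show s n = 0
    apply Complex.ext <;> simp [hre, him]
  have hsurj : Function.Surjective C.stilde := by
    have hinj' : Function.Injective (stildeLin C) := by
      rw [← LinearMap.ker_eq_bot, LinearMap.ker_eq_bot']
      intro s hs
      exact hinj s hs
    exact LinearMap.injective_iff_surjective.mp hinj'
  have horth' : ∀ g h s, C.gram g h s k k' = 0 := by
    rw [DistCode.RNonOrth, not_not] at horth
    exact horth
  have hsum0 : ∀ (h : Fin K → ℂ) (s : Fin N → ℂ),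
      ∑ t, C.codeword h s k t * (starRingEnd ℂ) (C.codeword h s k' t) = 0 := by
    intro h s
    have hg := horth' 0 h s
    rw [hgram0] at hg
    simpa [Matrix.mul_apply, Matrix.conjTranspose_apply] using hg
  have hks : k' ≠ k := hkk.symm
  have hpair : ∀ s : Fin N → ℂ,
      (∑ t, Matrix.vecMul (C.stilde s) (C.A k) t *
        (starRingEnd ℂ) (Matrix.vecMul (C.stilde s) (C.A k') t) = 0)
      ∧ (∑ t, Matrix.vecMul (fun n => (starRingEnd ℂ) (C.stilde s n)) (C.B k) t *
          (starRingEnd ℂ) (Matrix.vecMul (fun n => (starRingEnd ℂ) (C.stilde s n)) (C.B k') t) = 0) := by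
    intro s
    apply S11Aux.pair_zero
    intro u v
    set h : Fin K → ℂ := fun j => if j = k then u else if j = k' then v else 1 with hh
    have hk1 : h k = u := by simp [hh]
    have hk2 : h k' = v := by simp [hh, hks]
    rw [← hsum0 h s]
    apply Finset.sum_congr rfl
    intro t _
    simp only [DistCode.codeword, hk1, hk2, _root_.map_add, _root_.map_mul, Complex.conj_conj]
  have hQA : ∀ v : Fin N → ℂ,
      ∑ t, Matrix.vecMul v (C.A k) t * (starRingEnd ℂ) (Matrix.vecMul v (C.A k') t) = 0 := by
    intro v; obtain ⟨s, hs⟩ := hsurj v; rw [← hs]; exact (hpair s).1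
  have hQB : ∀ v : Fin N → ℂ,
      ∑ t, Matrix.vecMul v ((C.B k).cstar) t *
        (starRingEnd ℂ) (Matrix.vecMul v ((C.B k').cstar) t) = 0 := by
    intro v
    obtain ⟨s, hs⟩ := hsurj v
    have hd := (hpair s).2
    have h2 := congrArg (starRingEnd ℂ) hd
    rw [_root_.map_sum, map_zero] at h2
    rw [← hs, ← h2]
    apply Finset.sum_congr rfl
    intro t _
    simp only [Matrix.vecMul, dotProduct, Matrix.cstar, Matrix.map_apply, _root_.map_sum,
      _root_.map_mul, Complex.conj_conj]
  have keyA : ∀ i j : Fin N, ∑ t, C.A k i t * (starRingEnd ℂ) (C.A k' j t) = 0 :=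
    fun i j => S11Aux.entry_zero _ _ hQA i j
  have keyB : ∀ i j : Fin N, ∑ t, (starRingEnd ℂ) (C.B k i t) * C.B k' j t = 0 := by
    intro i j
    have h3 := S11Aux.entry_zero _ _ hQB i j
    simpa [Matrix.cstar, Matrix.map_apply, Complex.conj_conj] using h3
  refine ⟨?_, ?_, ?_, ?_⟩
  · ext i j
    simp only [Matrix.mul_apply, Matrix.conjTranspose_apply, Matrix.zero_apply]
    exact keyA i j
  · ext i j
    simp only [Matrix.mul_apply, Matrix.transpose_apply, Matrix.cstar, Matrix.map_apply,
      Matrix.zero_apply]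
    exact keyB i j
  · intro t i i' hA
    by_contra hA'
    have h0 := keyA i i'
    rw [Finset.sum_eq_single t ?sideA ?notmemA] at h0
    case sideA =>
      intro b _ hb
      by_cases hzb : C.A k i b = 0
      · rw [hzb, zero_mul]
      · exact absurd ((hrowmono k).1 i b t hzb hA) hb
    case notmemA => intro hn; exact absurd (Finset.mem_univ t) hn
    have hA'c : (starRingEnd ℂ) (C.A k' i' t) ≠ 0 := fun hz => hA' (by
      have := congrArg (starRingEnd ℂ) hz
      simpa [Complex.conj_conj] using this)
    exact absurd h0 (mul_ne_zero hA hA'c)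
  · intro t i i' hB
    by_contra hB'
    have h0 := keyB i i'
    rw [Finset.sum_eq_single t ?sideB ?notmemB] at h0
    case sideB =>
      intro b _ hb
      by_cases hzb : C.B k i b = 0
      · rw [hzb, map_zero, zero_mul]
      · exact absurd ((hrowmono k).2 i b t hzb hB) hb
    case notmemB => intro hn; exact absurd (Finset.mem_univ t) hn
    have hBc : (starRingEnd ℂ) (C.B k i t) ≠ 0 := fun hz => (by
      have := congrArg (starRingEnd ℂ) hz
      simp [Complex.conj_conj] at this
      exact hB this)
    exact absurd h0 (mul_ne_zero hBc hB')
end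
end

section
/- For all h = (h_1,h_2,h_3,h_4) ∈ ℂ⁴ and all x = (x_1,x_2,x_3,x_4) ∈ ℂ⁴, let x̃_1 = x_{1I} + i·x_{3Q}, x̃_2 = x_{2I} + i·x_{4Q}, x̃_3 = x_{3I} + i·x_{1Q}, x̃_4 = x_{4I} + i·x_{2Q}, and let X be the 4×4 complex matrix with rows: row 1 = (h_1·x̃_1, h_1·x̃_2, 0, 0); row 2 = (−conj(h_2)·conj(x̃_2), conj(h_2)·conj(x̃_1), 0, 0); row 3 = (0, 0, h_3·x̃_3, h_3·x̃_4); row 4 = (0, 0, −conj(h_4)·conj(x̃_4), conj(h_4)·conj(x̃_3)). Then X·Xᴴ is the diagonal matrix diag(|h_1|²·d₁, |h_2|²·d₁, |h_3|²·d₂, |h_4|²·d₂), where d₁ = x_{1I}² + x_{2I}² + x_{3Q}² + x_{4Q}² and d₂ = x_{1Q}² + x_{2Q}² + x_{3I}² + x_{4I}². In particular every entry of X·Xᴴ is a sum of terms each depending on the real and imaginary parts of a single symbol x_n, so this code (the precoded coordinate-interleaved orthogonal design X_PCIOD) is single-symbol decodable; it is a non-unitary PDSSDC since, e.g., the coefficient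 of x_{1I}² in the (3,3) and (4,4) entries is zero. -/
open Matrix

noncomputable section

/-- The coordinate-interleaved symbols of the PCIOD construction:
`x̃₁ = x_{1I} + i·x_{3Q}`, `x̃₂ = x_{2I} + i·x_{4Q}`,
`x̃₃ = x_{3I} + i·x_{1Q}`, `x̃₄ = x_{4I} + i·x_{2Q}`. -/
def xtP (x : Fin 4 → ℂ) : Fin 4 → ℂ :=
  ![((x 0).re : ℂ) + Complex.I * ((x 2).im : ℂ),
    ((x 1).re : ℂ) + Complex.I * ((x 3).im : ℂ),
    ((x 2).re : ℂ) + Complex.I * ((x 0).im : ℂ),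
    ((x 3).re : ℂ) + Complex.I * ((x 1).im : ℂ)]

/-- The codeword `X_PCIOD` of the precoded coordinate interleaved orthogonal design
for 4 relays. -/
def XPCIOD (h x : Fin 4 → ℂ) : Matrix (Fin 4) (Fin 4) ℂ :=
  Matrix.of
    ![![h 0 * xtP x 0, h 0 * xtP x 1, 0, 0],
      ![-(starRingEnd ℂ (h 1) * starRingEnd ℂ (xtP x 1)),
        starRingEnd ℂ (h 1) * starRingEnd ℂ (xtP x 0), 0, 0],
      ![0, 0, h 2 * xtP x 2, h 2 * xtP x 3],
      ![0, 0, -(starRingEnd ℂ (h 3) * starRingEnd ℂ (xtP x 3)),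
        starRingEnd ℂ (h 3) * starRingEnd ℂ (xtP x 2)]]

/-- The Gram matrix of the PCIOD codeword is the diagonal matrix
`diag(|h₁|²·d₁, |h₂|²·d₁, |h₃|²·d₂, |h₄|²·d₂)` where
`d₁ = x_{1I}² + x_{2I}² + x_{3Q}² + x_{4Q}²` and `d₂ = x_{1Q}² + x_{2Q}² + x_{3I}² + x_{4I}²`;
hence the code is single-symbol decodable (and it is a non-unitary PDSSDC). -/
theorem statement13 (h x : Fin 4 → ℂ) :
    XPCIOD h x * (XPCIOD h x)ᴴ =
      Matrix.diagonal
        ![((Complex.normSq (h 0) *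
            ((x 0).re ^ 2 + (x 1).re ^ 2 + (x 2).im ^ 2 + (x 3).im ^ 2) : ℝ) : ℂ),
          ((Complex.normSq (h 1) *
            ((x 0).re ^ 2 + (x 1).re ^ 2 + (x 2).im ^ 2 + (x 3).im ^ 2) : ℝ) : ℂ),
          ((Complex.normSq (h 2) *
            ((x 0).im ^ 2 + (x 1).im ^ 2 + (x 2).re ^ 2 + (x 3).re ^ 2) : ℝ) : ℂ),
          ((Complex.normSq (h 3) *
            ((x 0).im ^ 2 + (x 1).im ^ 2 + (x 2).re ^ 2 + (x 3).re ^ 2) : ℝ) : ℂ)] := by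
  set_option maxHeartbeats 1000000 in
  ext i j
  fin_cases i <;> fin_cases j <;>
    simp [XPCIOD, xtP, Matrix.mul_apply, Fin.sum_univ_four, Matrix.diagonal,
      Complex.ext_iff, Complex.normSq_apply, Complex.mul_re, Complex.mul_im,
      Complex.conj_re, Complex.conj_im, ← Complex.ofReal_pow] <;>
    first
      | exact ⟨trivial, trivial⟩
      | (constructor <;> ring)
end
end

section
/- Let N ≥ 2, let n ≠ n' be indices in {1,…,N}, and let ε be a nonzero complex number. Then there exist no vectors a, b ∈ ℂ^N such that for all h ∈ ℂ and all s = (s_1,…,s_N) ∈ ℂ^N: h·(Σ_{j=1}^N s_j·a_j) + conj(h)·(Σ_{j=1}^N conj(s_j)·b_j) = ε·h·(Re(s_n) + i·Im(s_{n'})). Consequently, when the source performs no precoding, no linear processing at a relay (left action by a pair of matrices A, B on the received vector and its conjugate) can produce an entry of the form ±h·x̃ in which the real and imaginary parts of x̃ come from two different information symbols; hence S-PDSSDCs other than those with uninterleaved symbols cannot be constructed without precoding at the source. -/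
/-- Section V of the paper. Without precoding at the source, no linear
processing at a relay can produce an entry of the form `ε·h·(Re(sₙ) + i·Im(s_{n'}))` with
`n ≠ n'`: there are no vectors `a, b ∈ ℂᴺ` such that for all `h` and `s`,
`h·(Σⱼ sⱼ·aⱼ) + conj(h)·(Σⱼ conj(sⱼ)·bⱼ) = ε·h·(Re(sₙ) + i·Im(s_{n'}))`. -/
theorem statement14 (N : ℕ) (hN : 2 ≤ N) (n n' : Fin N) (hnn : n ≠ n')
    (ε : ℂ) (hε : ε ≠ 0) :
    ¬ ∃ a b : Fin N → ℂ, ∀ (h : ℂ) (s : Fin N → ℂ),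
      h * (∑ j, s j * a j) + starRingEnd ℂ h * (∑ j, starRingEnd ℂ (s j) * b j)
        = ε * h * (((s n).re : ℂ) + Complex.I * ((s n').im : ℂ)) := by
  rintro ⟨a, b, H⟩
  -- For each c, use s = c·e_n.
  have key : ∀ c : ℂ, c * a n = ε * (c.re : ℂ) := by
    intro c
    set s : Fin N → ℂ := fun j => if j = n then c else 0 with hs
    have hsum1 : (∑ j, s j * a j) = c * a n := by
      simp [hs, Finset.sum_ite_eq', ite_mul]
    have hsum2 : (∑ j, starRingEnd ℂ (s j) * b j) = starRingEnd ℂ c * b n := by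
      simp [hs, Finset.sum_ite_eq', ite_mul, apply_ite (starRingEnd ℂ)]
    have hsn : s n = c := by simp [hs]
    have hsn' : s n' = 0 := by simp [hs, hnn.symm]
    have h1 := H 1 s
    have h2 := H Complex.I s
    rw [hsum1, hsum2, hsn, hsn'] at h1 h2
    simp only [map_one, one_mul, Complex.conj_I, Complex.zero_im,
      Complex.ofReal_zero, mul_zero, add_zero] at h1 h2
    -- h1 : c * a n + conj c * b n = ε * 1 * c.re
    -- h2 : I * (c * a n) + (-I) * (conj c * b n) = ε * I * c.re
    have h2' : c * a n - starRingEnd ℂ c * b n = ε * (c.re : ℂ) := by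
      linear_combination (-Complex.I) * h2 +
        (c * a n - starRingEnd ℂ c * b n - ε * (c.re:ℂ)) * Complex.I_sq
    have h1' : c * a n + starRingEnd ℂ c * b n = ε * (c.re : ℂ) := by
      linear_combination h1
    linear_combination (h1' + h2') / 2
  have k1 := key 1
  have k2 := key Complex.I
  simp only [Complex.I_re, Complex.ofReal_zero, mul_zero] at k2
  have han : a n = 0 := by
    rcases mul_eq_zero.mp k2 with h | h
    · exact absurd h Complex.I_ne_zero
    · exact h
  simp only [Complex.one_re, Complex.ofReal_one, mul_one, one_mul, han] at k1
  exact hε k1.symm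
end
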